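/- For any n×p matrix Φ and positive integer k with 4k ≤ p, δ_{4k}(Φ) ≤ 3·δ_{2k}(Φ). -/

import Mathlib

noncomputable def l2norm {p : ℕ} (c : Fin p → ℝ) : ℝ := Real.sqrt (∑ i, (c i)^2)

def IsSparse {p : ℕ} (k : ℕ) (c : Fin p → ℝ) : Prop :=
  (Finset.univ.filter (fun i => c i ≠ 0)).card ≤ k

/-- The restricted isometry constant `δ_k(Φ)`. -/
noncomputable def ripConst {n p : ℕ} (Φ : Matrix (Fin n) (Fin p) ℝ) (k : ℕ) : ℝ :=
  sInf {δ : ℝ | 0 ≤ δ ∧ ∀ c : Fin p → ℝ, IsSparse k c →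
    (1 - δ) * ∑ i, (c i)^2 ≤ (∑ i, (Φ.mulVec c i)^2) ∧
    (∑ i, (Φ.mulVec c i)^2) ≤ (1 + δ) * ∑ i, (c i)^2}

/-- The restricted orthogonality constant `θ_{k,k'}(Φ)`. -/
noncomputable def roConst {n p : ℕ} (Φ : Matrix (Fin n) (Fin p) ℝ) (k k' : ℕ) : ℝ :=
  sInf {θ : ℝ | 0 ≤ θ ∧ ∀ c c' : Fin p → ℝ, IsSparse k c → IsSparse k' c' →
    (∀ i, c i = 0 ∨ c' i = 0) →
    |∑ i, (Φ.mulVec c i) * (Φ.mulVec c' i)| ≤ θ * l2norm c * l2norm c'}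

namespace RipAux

variable {n p : ℕ}

noncomputable def Q (Φ : Matrix (Fin n) (Fin p) ℝ) (c : Fin p → ℝ) : ℝ :=
  ∑ i, (Φ.mulVec c i)^2

noncomputable def N {p : ℕ} (c : Fin p → ℝ) : ℝ := ∑ i, (c i)^2

noncomputable def B (Φ : Matrix (Fin n) (Fin p) ℝ) (x y : Fin p → ℝ) : ℝ :=
  ∑ i, (Φ.mulVec x i) * (Φ.mulVec y i)

lemma N_nonneg (c : Fin p → ℝ) : 0 ≤ N c :=
  Finset.sum_nonneg fun _ _ => sq_nonneg _

lemma Q_nonneg (Φ : Matrix (Fin n) (Fin p) ℝ) (c : Fin p → ℝ) : 0 ≤ Q Φ c :=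
  Finset.sum_nonneg fun _ _ => sq_nonneg _

lemma Q_add (Φ : Matrix (Fin n) (Fin p) ℝ) (x y : Fin p → ℝ) :
    Q Φ (x + y) = Q Φ x + Q Φ y + 2 * B Φ x y := by
  have h : ∀ i, (Φ.mulVec (x + y) i)^2
      = (Φ.mulVec x i)^2 + (Φ.mulVec y i)^2 + 2 * ((Φ.mulVec x i) * (Φ.mulVec y i)) := by
    intro i; rw [Matrix.mulVec_add]; simp only [Pi.add_apply]; ring
  simp only [Q, B, h, Finset.sum_add_distrib, Finset.mul_sum]

lemma Q_sub (Φ : Matrix (Fin n) (Fin p) ℝ) (x y : Fin p → ℝ) :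
    Q Φ (x - y) = Q Φ x + Q Φ y - 2 * B Φ x y := by
  have h : ∀ i, (Φ.mulVec (x - y) i)^2
      = (Φ.mulVec x i)^2 + (Φ.mulVec y i)^2 - 2 * ((Φ.mulVec x i) * (Φ.mulVec y i)) := by
    intro i; rw [Matrix.mulVec_sub]; simp only [Pi.sub_apply]; ring
  simp only [Q, B, h, Finset.sum_sub_distrib, Finset.sum_add_distrib, Finset.mul_sum]

lemma B_add_left (Φ : Matrix (Fin n) (Fin p) ℝ) (x y z : Fin p → ℝ) :
    B Φ (x + y) z = B Φ x z + B Φ y z := by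
  have h : ∀ i, (Φ.mulVec (x + y) i) * (Φ.mulVec z i)
      = (Φ.mulVec x i) * (Φ.mulVec z i) + (Φ.mulVec y i) * (Φ.mulVec z i) := by
    intro i; rw [Matrix.mulVec_add]; simp only [Pi.add_apply]; ring
  simp only [B, h, Finset.sum_add_distrib]

lemma B_add_right (Φ : Matrix (Fin n) (Fin p) ℝ) (x y z : Fin p → ℝ) :
    B Φ x (y + z) = B Φ x y + B Φ x z := by
  have h : ∀ i, (Φ.mulVec x i) * (Φ.mulVec (y + z) i)
      = (Φ.mulVec x i) * (Φ.mulVec y i) + (Φ.mulVec x i) * (Φ.mulVec z i) := by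
    intro i; rw [Matrix.mulVec_add]; simp only [Pi.add_apply]; ring
  simp only [B, h, Finset.sum_add_distrib]

lemma sparse_add {a b : ℕ} {x y : Fin p → ℝ} (hx : IsSparse a x) (hy : IsSparse b y) :
    IsSparse (a + b) (x + y) := by
  classical
  refine le_trans (le_trans (Finset.card_le_card ?_) (Finset.card_union_le _ _))
    (add_le_add hx hy)
  intro i hi
  simp only [Finset.mem_filter, Finset.mem_union, Finset.mem_univ, true_and,
    Pi.add_apply] at hi ⊢
  by_contra hcon
  push_neg at hcon
  rw [hcon.1, hcon.2, add_zero] at hi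
  exact hi rfl

lemma sparse_sub {a b : ℕ} {x y : Fin p → ℝ} (hx : IsSparse a x) (hy : IsSparse b y) :
    IsSparse (a + b) (x - y) := by
  classical
  refine le_trans (le_trans (Finset.card_le_card ?_) (Finset.card_union_le _ _))
    (add_le_add hx hy)
  intro i hi
  simp only [Finset.mem_filter, Finset.mem_union, Finset.mem_univ, true_and,
    Pi.sub_apply] at hi ⊢
  by_contra hcon
  push_neg at hcon
  rw [hcon.1, hcon.2, sub_zero] at hi
  exact hi rfl

lemma N_add_disj {x y : Fin p → ℝ} (h : ∀ i, x i = 0 ∨ y i = 0) :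
    N (x + y) = N x + N y := by
  simp only [N, Pi.add_apply, ← Finset.sum_add_distrib]
  refine Finset.sum_congr rfl fun i _ => ?_
  rcases h i with h' | h' <;> rw [h'] <;> ring

lemma N_sub_disj {x y : Fin p → ℝ} (h : ∀ i, x i = 0 ∨ y i = 0) :
    N (x - y) = N x + N y := by
  simp only [N, Pi.sub_apply, ← Finset.sum_add_distrib]
  refine Finset.sum_congr rfl fun i _ => ?_
  rcases h i with h' | h' <;> rw [h'] <;> ring

end RipAux
namespace RipAux

variable {n p : ℕ}

lemma ripSet_nonempty (Φ : Matrix (Fin n) (Fin p) ℝ) (k : ℕ) :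
    Set.Nonempty {δ : ℝ | 0 ≤ δ ∧ ∀ c : Fin p → ℝ, IsSparse k c →
      (1 - δ) * ∑ i, (c i)^2 ≤ (∑ i, (Φ.mulVec c i)^2) ∧
      (∑ i, (Φ.mulVec c i)^2) ≤ (1 + δ) * ∑ i, (c i)^2} := by
  refine ⟨1 + ∑ i, ∑ j, (Φ i j)^2, ?_, ?_⟩
  · have : (0:ℝ) ≤ ∑ i, ∑ j, (Φ i j)^2 :=
      Finset.sum_nonneg fun _ _ => Finset.sum_nonneg fun _ _ => sq_nonneg _
    linarith
  · intro c _
    have hN : (0:ℝ) ≤ ∑ i, (c i)^2 := Finset.sum_nonneg fun _ _ => sq_nonneg _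
    have hQ : (0:ℝ) ≤ ∑ i, (Φ.mulVec c i)^2 := Finset.sum_nonneg fun _ _ => sq_nonneg _
    have hF : (0:ℝ) ≤ ∑ i, ∑ j, (Φ i j)^2 :=
      Finset.sum_nonneg fun _ _ => Finset.sum_nonneg fun _ _ => sq_nonneg _
    constructor
    · nlinarith
    · have hCS : ∀ i, (Φ.mulVec c i)^2 ≤ (∑ j, (Φ i j)^2) * ∑ j, (c j)^2 := by
        intro i
        have := Finset.sum_mul_sq_le_sq_mul_sq Finset.univ (fun j => Φ i j) c
        simpa [Matrix.mulVec, dotProduct] using this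
      have h1 : (∑ i, (Φ.mulVec c i)^2) ≤ ∑ i, ((∑ j, (Φ i j)^2) * ∑ j, (c j)^2) :=
        Finset.sum_le_sum fun i _ => hCS i
      rw [← Finset.sum_mul] at h1
      nlinarith

lemma ripConst_mem (Φ : Matrix (Fin n) (Fin p) ℝ) (k : ℕ) :
    0 ≤ ripConst Φ k ∧ ∀ c : Fin p → ℝ, IsSparse k c →
      (1 - ripConst Φ k) * N c ≤ Q Φ c ∧ Q Φ c ≤ (1 + ripConst Φ k) * N c := by
  have hne := ripSet_nonempty Φ k
  have hlow : ∀ x ∈ {δ : ℝ | 0 ≤ δ ∧ ∀ c : Fin p → ℝ, IsSparse k c →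
      (1 - δ) * ∑ i, (c i)^2 ≤ (∑ i, (Φ.mulVec c i)^2) ∧
      (∑ i, (Φ.mulVec c i)^2) ≤ (1 + δ) * ∑ i, (c i)^2}, (0:ℝ) ≤ x :=
    fun x hx => hx.1
  have h0 : 0 ≤ ripConst Φ k := le_csInf hne hlow
  refine ⟨h0, fun c hc => ?_⟩
  have key : ∀ ε : ℝ, 0 < ε →
      (1 - (ripConst Φ k + ε)) * N c ≤ Q Φ c ∧ Q Φ c ≤ (1 + (ripConst Φ k + ε)) * N c := by
    intro ε hε
    obtain ⟨δ, hδmem, hδlt⟩ := Real.lt_sInf_add_pos hne hε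
    have h := hδmem.2 c hc
    have hN : (0:ℝ) ≤ N c := N_nonneg c
    have hδle : δ ≤ ripConst Φ k + ε := le_of_lt hδlt
    constructor
    · calc (1 - (ripConst Φ k + ε)) * N c ≤ (1 - δ) * N c := by nlinarith
        _ ≤ Q Φ c := h.1
    · calc Q Φ c ≤ (1 + δ) * N c := h.2
        _ ≤ (1 + (ripConst Φ k + ε)) * N c := by nlinarith
  have hN : (0:ℝ) ≤ N c := N_nonneg c
  constructor
  · have : ∀ ε : ℝ, 0 < ε → (1 - ripConst Φ k) * N c ≤ Q Φ c + ε := by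
      intro ε hε
      have h := (key (ε / (N c + 1)) (by positivity)).1
      have hle : (ε / (N c + 1)) * N c ≤ ε := by
        rw [div_mul_eq_mul_div, div_le_iff₀ (by linarith)]
        nlinarith
      nlinarith
    linarith [le_of_forall_pos_le_add this]
  · have : ∀ ε : ℝ, 0 < ε → Q Φ c ≤ (1 + ripConst Φ k) * N c + ε := by
      intro ε hε
      have h := (key (ε / (N c + 1)) (by positivity)).2
      have hle : (ε / (N c + 1)) * N c ≤ ε := by
        rw [div_mul_eq_mul_div, div_le_iff₀ (by linarith)]
        nlinarith
      nlinarith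
    exact le_of_forall_pos_le_add this

lemma split {a b : ℕ} {c : Fin p → ℝ} (h : IsSparse (a + b) c) :
    ∃ x y : Fin p → ℝ, c = x + y ∧ IsSparse a x ∧ IsSparse b y ∧
      (∀ i, x i = 0 ∨ y i = 0) ∧ (∀ i, c i = 0 → x i = 0 ∧ y i = 0) := by
  classical
  set s := Finset.univ.filter (fun i => c i ≠ 0) with hs
  obtain ⟨t, hts, htc⟩ := Finset.exists_subset_card_eq (min_le_right a s.card)
  refine ⟨fun i => if i ∈ t then c i else 0, fun i => if i ∈ t then 0 else c i,
    ?_, ?_, ?_, ?_, ?_⟩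
  · funext i; by_cases hi : i ∈ t <;> simp [hi]
  · have hsub : (Finset.univ.filter fun i => (if i ∈ t then c i else 0) ≠ 0) ⊆ t := by
      intro i hi
      simp only [Finset.mem_filter] at hi
      by_contra hit
      simp [hit] at hi
    refine le_trans (Finset.card_le_card hsub) ?_
    rw [htc]; exact min_le_left _ _
  · have hsub : (Finset.univ.filter fun i => (if i ∈ t then 0 else c i) ≠ 0) ⊆ s \ t := by
      intro i hi
      simp only [Finset.mem_filter, Finset.mem_univ, true_and] at hi
      by_cases hit : i ∈ t
      · simp [hit] at hi
      · simp only [hit, if_false] at hi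
        rw [Finset.mem_sdiff, hs]
        exact ⟨Finset.mem_filter.mpr ⟨Finset.mem_univ i, hi⟩, hit⟩
    refine le_trans (Finset.card_le_card hsub) ?_
    rw [Finset.card_sdiff_of_subset hts, htc]
    have hcard : s.card ≤ a + b := h
    omega
  · intro i; by_cases hi : i ∈ t <;> simp [hi]
  · intro i hci; by_cases hi : i ∈ t <;> simp [hi, hci]

end RipAux
namespace RipAux

variable {n p : ℕ}

lemma polar {Φ : Matrix (Fin n) (Fin p) ℝ} {δ : ℝ} {k : ℕ}
    (hrip : ∀ c : Fin p → ℝ, IsSparse (2*k) c →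
      (1-δ) * N c ≤ Q Φ c ∧ Q Φ c ≤ (1+δ) * N c)
    {x y : Fin p → ℝ} (hx : IsSparse k x) (hy : IsSparse k y)
    (hd : ∀ i, x i = 0 ∨ y i = 0) :
    |B Φ x y| ≤ δ * (N x + N y) / 2 := by
  have hs : IsSparse (2*k) (x + y) := by
    have := sparse_add hx hy; rwa [← two_mul] at this
  have hs' : IsSparse (2*k) (x - y) := by
    have := sparse_sub hx hy; rwa [← two_mul] at this
  have h1 := hrip _ hs
  have h2 := hrip _ hs'
  rw [Q_add, N_add_disj hd] at h1
  rw [Q_sub, N_sub_disj hd] at h2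
  rw [abs_le]
  constructor <;> linarith [h1.1, h1.2, h2.1, h2.2]

end RipAux

open RipAux in
theorem ripConst_four_le (n p k : ℕ) (Φ : Matrix (Fin n) (Fin p) ℝ)
    (hk : 0 < k) (hp : 4 * k ≤ p) :
    ripConst Φ (4 * k) ≤ 3 * ripConst Φ (2 * k) := by
  classical
  obtain ⟨hδ0, hrip⟩ := ripConst_mem Φ (2*k)
  set δ := ripConst Φ (2*k) with hδdef
  have hmem : 3*δ ∈ {δ' : ℝ | 0 ≤ δ' ∧ ∀ c : Fin p → ℝ, IsSparse (4*k) c →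
      (1 - δ') * ∑ i, (c i)^2 ≤ (∑ i, (Φ.mulVec c i)^2) ∧
      (∑ i, (Φ.mulVec c i)^2) ≤ (1 + δ') * ∑ i, (c i)^2} := by
    refine ⟨by linarith, fun c hc => ?_⟩
    have hc' : IsSparse (2*k + 2*k) c := by
      have h4 : 2*k + 2*k = 4*k := by ring
      rwa [h4]
    obtain ⟨aa, bb, habc, ha, hb, hdab, hzab⟩ := split hc'
    have ha' : IsSparse (k + k) aa := by
      have h2 : k + k = 2*k := by ring
      rwa [h2]
    obtain ⟨a1, a2, ha12, ha1, ha2, hda, hza⟩ := split ha'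
    have hb' : IsSparse (k + k) bb := by
      have h2 : k + k = 2*k := by ring
      rwa [h2]
    obtain ⟨b1, b2, hb12, hb1, hb2, hdb, hzb⟩ := split hb'
    have hdisj : ∀ (u v : Fin p → ℝ), (∀ i, aa i = 0 → u i = 0) →
        (∀ i, bb i = 0 → v i = 0) → ∀ i, u i = 0 ∨ v i = 0 := by
      intro u v hu hv i
      rcases hdab i with h | h
      · exact Or.inl (hu i h)
      · exact Or.inr (hv i h)
    have p11 := polar hrip ha1 hb1 (hdisj a1 b1 (fun i h => (hza i h).1) (fun i h => (hzb i h).1))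
    have p12 := polar hrip ha1 hb2 (hdisj a1 b2 (fun i h => (hza i h).1) (fun i h => (hzb i h).2))
    have p21 := polar hrip ha2 hb1 (hdisj a2 b1 (fun i h => (hza i h).2) (fun i h => (hzb i h).1))
    have p22 := polar hrip ha2 hb2 (hdisj a2 b2 (fun i h => (hza i h).2) (fun i h => (hzb i h).2))
    have hca : Q Φ c = Q Φ aa + Q Φ bb + 2 * B Φ aa bb := by
      rw [habc, Q_add]
    have hNca : N c = N aa + N bb := by rw [habc, N_add_disj hdab]
    have hNa : N aa = N a1 + N a2 := by rw [ha12, N_add_disj hda]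
    have hNb : N bb = N b1 + N b2 := by rw [hb12, N_add_disj hdb]
    have hBa : B Φ aa bb = B Φ a1 b1 + B Φ a1 b2 + B Φ a2 b1 + B Φ a2 b2 := by
      rw [ha12, hb12, B_add_left, B_add_right, B_add_right]; ring
    have hB : |B Φ aa bb| ≤ δ * (N aa + N bb) := by
      rw [hBa, hNa, hNb]
      calc |B Φ a1 b1 + B Φ a1 b2 + B Φ a2 b1 + B Φ a2 b2|
          ≤ |B Φ a1 b1| + |B Φ a1 b2| + |B Φ a2 b1| + |B Φ a2 b2| := by
            calc |B Φ a1 b1 + B Φ a1 b2 + B Φ a2 b1 + B Φ a2 b2|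
                ≤ |B Φ a1 b1 + B Φ a1 b2 + B Φ a2 b1| + |B Φ a2 b2| := abs_add_le _ _
              _ ≤ |B Φ a1 b1 + B Φ a1 b2| + |B Φ a2 b1| + |B Φ a2 b2| :=
                  add_le_add_left (abs_add_le _ _) _
              _ ≤ |B Φ a1 b1| + |B Φ a1 b2| + |B Φ a2 b1| + |B Φ a2 b2| := by
                  have := abs_add_le (B Φ a1 b1) (B Φ a1 b2)
                  linarith
        _ ≤ δ * (N a1 + N b1) / 2 + δ * (N a1 + N b2) / 2
            + δ * (N a2 + N b1) / 2 + δ * (N a2 + N b2) / 2 := by linarith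
        _ = δ * ((N a1 + N a2) + (N b1 + N b2)) := by ring
    have hQa := hrip aa ha
    have hQb := hrip bb hb
    rw [abs_le] at hB
    show (1 - 3*δ) * N c ≤ Q Φ c ∧ Q Φ c ≤ (1 + 3*δ) * N c
    rw [hca, hNca]
    constructor
    · nlinarith [hQa.1, hQb.1, hB.1]
    · nlinarith [hQa.2, hQb.2, hB.2]
  exact csInf_le ⟨0, fun x hx => hx.1⟩ hmem
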